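/- For k, l ∈ {1, 2} and s, t ∈ {0, n}: if k = l = 2, then the tensor product datum M[2,s] ⊗ M[2,t] is isomorphic to M[2,0] ⊕ M[2,n]; if k + l < 4, then M[k,s] ⊗ M[l,t] is isomorphic to M[k+l−1, u], where u is the element of {0, n} congruent to s + t modulo 2n. -/

import Mathlib

open TensorProduct

/-- A `𝔴H₄ₙ*`-datum: a vector space with the actions of the generators `G` and `X`. -/
structure Datum (k : Type*) [Field k] (V : Type*) [AddCommGroup V] [Module k V] where
  G : Module.End k V
  X : Module.End k V

namespace Datum

variable {k : Type*} [Field k]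
variable {V W : Type*} [AddCommGroup V] [Module k V] [AddCommGroup W] [Module k W]

/-- The tensor product of two data, via the comultiplication
`Δ(G) = G ⊗ G`, `Δ(X) = X ⊗ 1 + G ⊗ X`. -/
noncomputable def tensor (d : Datum k V) (e : Datum k W) : Datum k (V ⊗[k] W) where
  G := TensorProduct.map d.G e.G
  X := TensorProduct.map d.X LinearMap.id + TensorProduct.map d.G e.X

/-- Direct sum of two data. -/
noncomputable def dsum (d : Datum k V) (e : Datum k W) : Datum k (V × W) where
  G := d.G.prodMap e.G
  X := d.X.prodMap e.X

/-- Isomorphism of data: a linear isomorphism intertwining the operators. -/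
def Iso (d : Datum k V) (e : Datum k W) : Prop :=
  ∃ f : V ≃ₗ[k] W, (∀ v : V, f (d.G v) = e.G (f v)) ∧ (∀ v : V, f (d.X v) = e.X (f v))

/-- The datum `M[1,s]` for `s ∈ {0, n}`. -/
noncomputable def M1 (n s : ℕ) : Datum k k :=
  ⟨((-1 : k) ^ (s / n)) • (1 : Module.End k k), 0⟩

/-- The datum `M[2,s]` for `s ∈ {0, n}`. -/
noncomputable def M2 (n s : ℕ) : Datum k (Fin 2 → k) :=
  ⟨Matrix.toLin' !![(-1 : k) ^ (s / n), 0; 0, -(-1 : k) ^ (s / n)],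
   Matrix.toLin' !![0, 0; 1, 0]⟩

/-- The datum `P_j` for `1 ≤ j ≤ n - 1`. -/
noncomputable def P (q : k) (j : ℕ) : Datum k (Fin 2 → k) :=
  ⟨Matrix.toLin' !![q ^ j, 0; 0, -q ^ j],
   Matrix.toLin' !![0, 1 - q ^ (2 * j); 1, 0]⟩

/-- The datum `N_i` for `i ∈ {0, 1}`. -/
noncomputable def N (i : ℕ) : Datum k k :=
  ⟨0, ((-1 : k) ^ i) • (1 : Module.End k k)⟩

/-- The datum `M₀`. -/
noncomputable def M0 : Datum k (Fin 2 → k) :=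
  ⟨0, Matrix.toLin' !![0, 1; 1, 0]⟩

end Datum

namespace Datum

variable {k : Type*} [Field k]

noncomputable def D1 (a : k) : Datum k k := ⟨a • (1 : Module.End k k), 0⟩

noncomputable def D2 (a : k) : Datum k (Fin 2 → k) :=
  ⟨Matrix.toLin' !![a, 0; 0, -a], Matrix.toLin' !![0, 0; 1, 0]⟩

lemma M1_eq (n s : ℕ) : (M1 n s : Datum k k) = D1 ((-1 : k) ^ (s / n)) := rfl

lemma M2_eq (n s : ℕ) : (M2 n s : Datum k (Fin 2 → k)) = D2 ((-1 : k) ^ (s / n)) := rfl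

lemma iso_D1_D1 (a b : k) : Iso (tensor (D1 a) (D1 b)) (D1 (a * b)) := by
  refine ⟨TensorProduct.lid k k, ?_, ?_⟩
  · intro v
    have h : (TensorProduct.lid k k).toLinearMap ∘ₗ (tensor (D1 a) (D1 b)).G
        = (D1 (a*b)).G ∘ₗ (TensorProduct.lid k k).toLinearMap := by
      apply TensorProduct.ext'
      intro x y
      simp [tensor, D1, TensorProduct.smul_tmul']
      ring
    exact LinearMap.congr_fun h v
  · intro v
    have h : (TensorProduct.lid k k).toLinearMap ∘ₗ (tensor (D1 a) (D1 b)).X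
        = (D1 (a*b)).X ∘ₗ (TensorProduct.lid k k).toLinearMap := by
      apply TensorProduct.ext'
      intro x y
      simp [tensor, D1]
    exact LinearMap.congr_fun h v

end Datum
namespace Datum

variable {k : Type*} [Field k]

lemma iso_D1_D2 (a b : k) (ha : a * a = 1) : Iso (tensor (D1 a) (D2 b)) (D2 (a * b)) := by
  have hinv : (Matrix.toLin' !![(1:k),0;0,a]) ∘ₗ Matrix.toLin' !![1,0;0,a] = LinearMap.id := by
    rw [← Matrix.toLin'_mul]
    have : !![(1:k),0;0,a] * !![1,0;0,a] = 1 := by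
      ext i j; fin_cases i <;> fin_cases j <;>
        simp [Matrix.mul_apply, Fin.sum_univ_succ, ha]
    rw [this, Matrix.toLin'_one]
  set φ : (Fin 2 → k) ≃ₗ[k] (Fin 2 → k) :=
    LinearEquiv.ofLinear (Matrix.toLin' !![1,0;0,a]) (Matrix.toLin' !![1,0;0,a]) hinv hinv
  refine ⟨(TensorProduct.lid k (Fin 2 → k)).trans φ, ?_, ?_⟩
  · intro v
    have h : ((TensorProduct.lid k (Fin 2 → k)).trans φ).toLinearMap ∘ₗ (tensor (D1 a) (D2 b)).G
        = (D2 (a*b)).G ∘ₗ ((TensorProduct.lid k (Fin 2 → k)).trans φ).toLinearMap := by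
      apply TensorProduct.ext'
      intro x y
      simp only [tensor, D1, D2, LinearMap.comp_apply, LinearEquiv.coe_coe,
        TensorProduct.map_tmul, LinearEquiv.trans_apply, TensorProduct.lid_tmul,
        LinearMap.smul_apply, Module.End.one_apply, map_smul, φ,
        LinearEquiv.ofLinear_apply]
      funext i
      fin_cases i <;>
        simp [Matrix.toLin'_apply, Matrix.mulVec, dotProduct, Fin.sum_univ_succ] <;>
        ring
    exact LinearMap.congr_fun h v
  · intro v
    have h : ((TensorProduct.lid k (Fin 2 → k)).trans φ).toLinearMap ∘ₗ (tensor (D1 a) (D2 b)).X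
        = (D2 (a*b)).X ∘ₗ ((TensorProduct.lid k (Fin 2 → k)).trans φ).toLinearMap := by
      apply TensorProduct.ext'
      intro x y
      simp only [tensor, D1, D2, LinearMap.comp_apply, LinearEquiv.coe_coe,
        LinearMap.add_apply, TensorProduct.map_tmul, LinearEquiv.trans_apply,
        map_add, TensorProduct.lid_tmul, LinearMap.smul_apply, Module.End.one_apply,
        LinearMap.zero_apply, TensorProduct.zero_tmul, map_smul, map_zero, zero_add,
        LinearMap.id_apply, φ, LinearEquiv.ofLinear_apply]
      funext i
      fin_cases i <;>
        simp [Matrix.toLin'_apply, Matrix.mulVec, dotProduct, Fin.sum_univ_succ] <;>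
        all_goals linear_combination (x * y 0) * ha
    exact LinearMap.congr_fun h v

end Datum
namespace Datum

variable {k : Type*} [Field k]

lemma iso_D2_D1 (a b : k) : Iso (tensor (D2 a) (D1 b)) (D2 (a * b)) := by
  refine ⟨TensorProduct.rid k (Fin 2 → k), ?_, ?_⟩
  · intro v
    have h : (TensorProduct.rid k (Fin 2 → k)).toLinearMap ∘ₗ (tensor (D2 a) (D1 b)).G
        = (D2 (a*b)).G ∘ₗ (TensorProduct.rid k (Fin 2 → k)).toLinearMap := by
      apply TensorProduct.ext'
      intro x y
      simp only [tensor, D1, D2, LinearMap.comp_apply, LinearEquiv.coe_coe,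
        TensorProduct.map_tmul, TensorProduct.rid_tmul, LinearMap.smul_apply,
        Module.End.one_apply, map_smul, smul_eq_mul]
      funext i
      fin_cases i <;>
        simp [Matrix.toLin'_apply, Matrix.mulVec, dotProduct, Fin.sum_univ_succ] <;>
        ring
    exact LinearMap.congr_fun h v
  · intro v
    have h : (TensorProduct.rid k (Fin 2 → k)).toLinearMap ∘ₗ (tensor (D2 a) (D1 b)).X
        = (D2 (a*b)).X ∘ₗ (TensorProduct.rid k (Fin 2 → k)).toLinearMap := by
      apply TensorProduct.ext'
      intro x y
      simp only [tensor, D1, D2, LinearMap.comp_apply, LinearEquiv.coe_coe,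
        LinearMap.add_apply, TensorProduct.map_tmul, LinearMap.zero_apply,
        TensorProduct.tmul_zero, map_add, map_zero, add_zero, TensorProduct.rid_tmul,
        LinearMap.id_apply, map_smul]
    exact LinearMap.congr_fun h v

end Datum
namespace Datum

variable {k : Type*} [Field k]

lemma dsum_comm {V W : Type*} [AddCommGroup V] [Module k V] [AddCommGroup W] [Module k W]
    (d : Datum k V) (e : Datum k W) : Iso (dsum d e) (dsum e d) :=
  ⟨LinearEquiv.prodComm k V W, fun v => rfl, fun v => rfl⟩

lemma Iso.trans {U V W : Type*} [AddCommGroup U] [Module k U] [AddCommGroup V] [Module k V]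
    [AddCommGroup W] [Module k W] {c : Datum k U} {d : Datum k V} {e : Datum k W}
    (h1 : Iso c d) (h2 : Iso d e) : Iso c e := by
  obtain ⟨f, hf1, hf2⟩ := h1
  obtain ⟨g, hg1, hg2⟩ := h2
  exact ⟨f.trans g, fun v => by simp [hf1 v, hg1 (f v)],
         fun v => by simp [hf2 v, hg2 (f v)]⟩

set_option maxHeartbeats 1000000 in
lemma iso_D2_D2 (a b : k) :
    Iso (tensor (D2 a) (D2 b)) (dsum (D2 (a * b)) (D2 (-(a * b)))) := by
  classical
  set e : Module.Basis (Fin 2) k (Fin 2 → k) := Pi.basisFun k (Fin 2) with he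
  have hGl : ∀ c : k, Matrix.toLin' !![c, 0; 0, -c] (e 0) = c • e 0 := by
    intro c; funext i; fin_cases i <;>
      simp [he, Matrix.toLin'_apply, Matrix.mulVec, dotProduct, Fin.sum_univ_succ]
  have hGr : ∀ c : k, Matrix.toLin' !![c, 0; 0, -c] (e 1) = (-c) • e 1 := by
    intro c; funext i; fin_cases i <;>
      simp [he, Matrix.toLin'_apply, Matrix.mulVec, dotProduct, Fin.sum_univ_succ]
  have hXl : Matrix.toLin' !![(0:k), 0; 1, 0] (e 0) = e 1 := by
    funext i; fin_cases i <;>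
      simp [he, Matrix.toLin'_apply, Matrix.mulVec, dotProduct, Fin.sum_univ_succ]
  have hXr : Matrix.toLin' !![(0:k), 0; 1, 0] (e 1) = 0 := by
    funext i; fin_cases i <;>
      simp [he, Matrix.toLin'_apply, Matrix.mulVec, dotProduct, Fin.sum_univ_succ]
  set B : Module.Basis (Fin 2 × Fin 2) k ((Fin 2 → k) ⊗[k] (Fin 2 → k)) := Module.Basis.tensorProduct e e
    with hB
  set B2 : Module.Basis (Fin 2 ⊕ Fin 2) k ((Fin 2 → k) × (Fin 2 → k)) := e.prod e with hB2
  set u : Fin 2 × Fin 2 → (Fin 2 → k) × (Fin 2 → k) := fun p =>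
    !![((e 0, 0) : (Fin 2 → k) × (Fin 2 → k)), (0, e 0);
       (e 1, 0) - a • ((0 : Fin 2 → k), e 0), (0, e 1)] p.1 p.2 with hu
  set g : Fin 2 ⊕ Fin 2 → (Fin 2 → k) ⊗[k] (Fin 2 → k) :=
    Sum.elim ![e 0 ⊗ₜ e 0, e 1 ⊗ₜ e 0 + a • e 0 ⊗ₜ[k] e 1] ![e 0 ⊗ₜ e 1, e 1 ⊗ₜ e 1] with hg
  set F : ((Fin 2 → k) ⊗[k] (Fin 2 → k)) →ₗ[k] (Fin 2 → k) × (Fin 2 → k) := B.constr k u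
    with hF
  set Gm : ((Fin 2 → k) × (Fin 2 → k)) →ₗ[k] (Fin 2 → k) ⊗[k] (Fin 2 → k) := B2.constr k g
    with hGm
  have hFb : ∀ i j : Fin 2, F (e i ⊗ₜ[k] e j) = u (i, j) := by
    intro i j
    rw [← Module.Basis.tensorProduct_apply, ← hB, hF, Module.Basis.constr_basis]
  have hGmb : ∀ i : Fin 2 ⊕ Fin 2, Gm (B2 i) = g i := fun i => B2.constr_basis k g i
  have hB2l : ∀ i : Fin 2, ((e i, 0) : (Fin 2 → k) × (Fin 2 → k)) = B2 (Sum.inl i) := by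
    intro i; rw [hB2]; simp
  have hB2r : ∀ i : Fin 2, ((0, e i) : (Fin 2 → k) × (Fin 2 → k)) = B2 (Sum.inr i) := by
    intro i; rw [hB2]; simp
  have h1 : Gm ∘ₗ F = LinearMap.id := by
    apply B.ext
    rintro ⟨i, j⟩
    fin_cases i <;> fin_cases j <;>
      simp only [Fin.zero_eta, Fin.mk_one, Fin.isValue, hB, Module.Basis.tensorProduct_apply, LinearMap.comp_apply, LinearMap.id_apply,
        hFb, hu, Matrix.of_apply, Matrix.cons_val', Matrix.cons_val_zero, Matrix.cons_val_one, Matrix.head_cons,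
        Matrix.head_fin_const, Matrix.empty_val', Matrix.cons_val_fin_one, map_sub, map_smul,
        hB2l, hB2r, hGmb, hg, Sum.elim_inl, Sum.elim_inr, Matrix.cons_val_zero,
        Matrix.cons_val_one] <;>
      abel
  have h2 : F ∘ₗ Gm = LinearMap.id := by
    apply B2.ext
    rintro (i | i) <;> fin_cases i <;>
      simp only [Fin.zero_eta, Fin.mk_one, Fin.isValue, LinearMap.comp_apply, LinearMap.id_apply, hGmb, hg, Sum.elim_inl, Sum.elim_inr,
        Matrix.cons_val_zero, Matrix.cons_val_one, Matrix.head_cons, map_add, map_smul, hFb,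
        hu, Matrix.of_apply, Matrix.cons_val', Matrix.empty_val', Matrix.cons_val_fin_one, Matrix.head_fin_const,
        hB2l, hB2r] <;>
      abel
  refine ⟨LinearEquiv.ofLinear F Gm h2 h1, ?_, ?_⟩
  · intro v
    have h : F ∘ₗ (tensor (D2 a) (D2 b)).G = (dsum (D2 (a*b)) (D2 (-(a*b)))).G ∘ₗ F := by
      apply B.ext
      rintro ⟨i, j⟩
      simp only [hB, Module.Basis.tensorProduct_apply, LinearMap.comp_apply, tensor, dsum, D2,
        TensorProduct.map_tmul]
      fin_cases i <;> fin_cases j <;>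
        simp only [Fin.zero_eta, Fin.mk_one, Fin.isValue, hGl, hGr, ← TensorProduct.smul_tmul', TensorProduct.tmul_smul, smul_smul, neg_smul, smul_neg, TensorProduct.neg_tmul, TensorProduct.tmul_neg, map_neg, Prod.neg_mk, neg_neg,
          map_smul, hFb, hu, Matrix.of_apply, Matrix.cons_val', Matrix.cons_val_zero, Matrix.cons_val_one,
          Matrix.head_cons, Matrix.empty_val', Matrix.cons_val_fin_one, Matrix.head_fin_const,
          map_sub, LinearMap.prodMap_apply, Prod.smul_mk, Prod.mk_sub_mk, smul_zero, map_zero,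
          Prod.ext_iff] <;>
        (try simp [he, Prod.ext_iff, funext_iff, Fin.forall_fin_two, Pi.single_apply,
          Matrix.vecHead, Matrix.vecTail]) <;> (try ring)
      all_goals exact ⟨trivial, trivial⟩
    exact LinearMap.congr_fun h v
  · intro v
    have h : F ∘ₗ (tensor (D2 a) (D2 b)).X = (dsum (D2 (a*b)) (D2 (-(a*b)))).X ∘ₗ F := by
      apply B.ext
      rintro ⟨i, j⟩
      simp only [hB, Module.Basis.tensorProduct_apply, LinearMap.comp_apply, tensor, dsum, D2,
        LinearMap.add_apply, TensorProduct.map_tmul, LinearMap.id_apply]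
      fin_cases i <;> fin_cases j <;>
        simp only [Fin.zero_eta, Fin.mk_one, Fin.isValue, hGl, hGr, hXl, hXr, ← TensorProduct.smul_tmul', TensorProduct.tmul_smul, neg_smul, smul_neg, TensorProduct.neg_tmul, TensorProduct.tmul_neg, map_neg, Prod.neg_mk, neg_neg,
          smul_smul, TensorProduct.zero_tmul, TensorProduct.tmul_zero, smul_zero, add_zero,
          zero_add, map_add, map_smul, hFb, hu, Matrix.of_apply, Matrix.cons_val', Matrix.cons_val_zero,
          Matrix.cons_val_one, Matrix.head_cons, Matrix.empty_val', Matrix.cons_val_fin_one,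
          Matrix.head_fin_const, map_sub, LinearMap.prodMap_apply, Prod.smul_mk, Prod.mk_sub_mk,
          map_zero, Prod.ext_iff] <;>
        (try simp [he, Prod.ext_iff, funext_iff, Fin.forall_fin_two, Pi.single_apply,
          Matrix.vecHead, Matrix.vecTail]) <;> (try exact ⟨trivial, trivial⟩) <;> (try ring)
    exact LinearMap.congr_fun h v

end Datum
/-- for `s, t ∈ {0, n}`: `M[2,s] ⊗ M[2,t] ≅ M[2,0] ⊕ M[2,n]`, and
for `k + l < 4`, `M[k,s] ⊗ M[l,t] ≅ M[k+l-1,u]` where `u ∈ {0,n}` is congruent to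
`s + t` mod `2n` (that is, `u = 0` if `s = t` and `u = n` otherwise). -/
theorem stmt_17 {k : Type*} [Field k] [CharZero k] (n : ℕ) (hn : 2 ≤ n)
    (q : k) (hq : IsPrimitiveRoot q (2 * n)) (s t : ℕ)
    (hs : s = 0 ∨ s = n) (ht : t = 0 ∨ t = n) :
    Datum.Iso (Datum.tensor (Datum.M2 (k := k) n s) (Datum.M2 (k := k) n t))
      (Datum.dsum (Datum.M2 (k := k) n 0) (Datum.M2 (k := k) n n)) ∧
    Datum.Iso (Datum.tensor (Datum.M1 (k := k) n s) (Datum.M1 (k := k) n t))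
      (Datum.M1 (k := k) n (if s = t then 0 else n)) ∧
    Datum.Iso (Datum.tensor (Datum.M1 (k := k) n s) (Datum.M2 (k := k) n t))
      (Datum.M2 (k := k) n (if s = t then 0 else n)) ∧
    Datum.Iso (Datum.tensor (Datum.M2 (k := k) n s) (Datum.M1 (k := k) n t))
      (Datum.M2 (k := k) n (if s = t then 0 else n)) := by
  have hn0 : 0 < n := by omega
  have e20 : (Datum.M2 (k := k) n 0) = Datum.D2 1 := by
    rw [Datum.M2_eq]; norm_num
  have e2n : (Datum.M2 (k := k) n n) = Datum.D2 (-1) := by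
    rw [Datum.M2_eq, Nat.div_self hn0]; norm_num
  have e10 : (Datum.M1 (k := k) n 0) = Datum.D1 1 := by
    rw [Datum.M1_eq]; norm_num
  have e1n : (Datum.M1 (k := k) n n) = Datum.D1 (-1) := by
    rw [Datum.M1_eq, Nat.div_self hn0]; norm_num
  rcases hs with hs | hs <;> rcases ht with ht | ht <;> rw [hs, ht]
  · rw [if_pos rfl, e20, e2n, e10]
    refine ⟨?_, ?_, ?_, ?_⟩
    · have h := Datum.iso_D2_D2 (1 : k) 1
      rw [one_mul] at h; exact h
    · have h := Datum.iso_D1_D1 (1 : k) 1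
      rw [one_mul] at h; exact h
    · have h := Datum.iso_D1_D2 (1 : k) 1 (by norm_num)
      rw [one_mul] at h; exact h
    · have h := Datum.iso_D2_D1 (1 : k) 1
      rw [one_mul] at h; exact h
  · have hne : (0 : ℕ) ≠ n := by omega
    rw [if_neg hne, e20, e2n, e10, e1n]
    refine ⟨?_, ?_, ?_, ?_⟩
    · have h := Datum.iso_D2_D2 (1 : k) (-1)
      rw [show (1 : k) * (-1) = -1 by ring, neg_neg] at h
      exact h.trans (Datum.dsum_comm _ _)
    · have h := Datum.iso_D1_D1 (1 : k) (-1)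
      rw [show (1 : k) * (-1) = -1 by ring] at h; exact h
    · have h := Datum.iso_D1_D2 (1 : k) (-1) (by norm_num)
      rw [show (1 : k) * (-1) = -1 by ring] at h; exact h
    · have h := Datum.iso_D2_D1 (1 : k) (-1)
      rw [show (1 : k) * (-1) = -1 by ring] at h; exact h
  · have hne : n ≠ (0 : ℕ) := by omega
    rw [if_neg hne, e20, e2n, e10, e1n]
    refine ⟨?_, ?_, ?_, ?_⟩
    · have h := Datum.iso_D2_D2 (-1 : k) 1
      rw [show (-1 : k) * 1 = -1 by ring, neg_neg] at h
      exact h.trans (Datum.dsum_comm _ _)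
    · have h := Datum.iso_D1_D1 (-1 : k) 1
      rw [show (-1 : k) * 1 = -1 by ring] at h; exact h
    · have h := Datum.iso_D1_D2 (-1 : k) 1 (by norm_num)
      rw [show (-1 : k) * 1 = -1 by ring] at h; exact h
    · have h := Datum.iso_D2_D1 (-1 : k) 1
      rw [show (-1 : k) * 1 = -1 by ring] at h; exact h
  · rw [if_pos rfl, e20, e2n, e10, e1n]
    refine ⟨?_, ?_, ?_, ?_⟩
    · have h := Datum.iso_D2_D2 (-1 : k) (-1)
      rw [show (-1 : k) * (-1) = 1 by ring] at h
      exact h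
    · have h := Datum.iso_D1_D1 (-1 : k) (-1)
      rw [show (-1 : k) * (-1) = 1 by ring] at h; exact h
    · have h := Datum.iso_D1_D2 (-1 : k) (-1) (by norm_num)
      rw [show (-1 : k) * (-1) = 1 by ring] at h; exact h
    · have h := Datum.iso_D2_D1 (-1 : k) (-1)
      rw [show (-1 : k) * (-1) = 1 by ring] at h; exact h
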